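/- Let σ: ℝ^K → ℝ^K be the MNL map [σ(z)]_i = e^{z_i}/(v_0 + ∑_{k=1}^K e^{z_k}) with v_0 = 1, let smooth_μ(q) = (1−μ)q + μ·1/(K+1), and let σ⁺ be its inverse on {p ∈ (0,1)^K : ‖p‖₁ < 1} given by [σ⁺(q)]_i = log(q_i/(1 − ‖q‖₁)). Then for any z ∈ ℝ^K and μ ∈ [0, 1/2], the smoothed point z^μ = σ⁺(smooth_μ(σ(z))) satisfies ‖z^μ‖_∞ ≤ log(1 + (K+1)/μ), and for any one-hot outcome y the cross-entropy losses satisfy ℓ(z^μ, y) − ℓ(z, y) ≤ 2μ. -/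

import Mathlib

set_option maxHeartbeats 1600000 in
theorem stmt_16 (K : ℕ) (σ : (Fin K → ℝ) → Fin K → ℝ)
    (hσ : ∀ z i, σ z i = Real.exp (z i) / (1 + ∑ k, Real.exp (z k)))
    (σp : (Fin K → ℝ) → Fin K → ℝ)
    (hσp : ∀ q i, σp q i = Real.log (q i / (1 - ∑ k, q k)))
    (μ : ℝ) (hμ0 : 0 ≤ μ) (hμ2 : μ ≤ 1 / 2)
    (z zμ : Fin K → ℝ)
    (hzμ : zμ = σp (fun i => (1 - μ) * σ z i + μ / (K + 1)))
    (loss : (Fin K → ℝ) → Option (Fin K) → ℝ)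
    (hloss : ∀ v c, loss v c = Real.log (1 /
      (match c with
       | none => 1 / (1 + ∑ k, Real.exp (v k))
       | some i => σ v i))) :
    (0 < μ → ∀ i, |zμ i| ≤ Real.log (1 + (K + 1) / μ)) ∧
    ∀ c, loss zμ c - loss z c ≤ 2 * μ := by
  have hK : (0:ℝ) < (K:ℝ) + 1 := by positivity
  have h1μ : (0:ℝ) < 1 - μ := by linarith
  set S := ∑ k, Real.exp (z k) with hSdef
  have hS0 : 0 ≤ S := Finset.sum_nonneg fun k _ => (Real.exp_pos _).le
  have hD : (0:ℝ) < 1 + S := by linarith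
  set q : Fin K → ℝ := fun i => (1 - μ) * σ z i + μ / ((K:ℝ) + 1) with hqdef
  have hq : ∀ i, q i = (1-μ) * (Real.exp (z i) / (1 + S)) + μ/((K:ℝ)+1) := by
    intro i; simp only [hqdef, hσ, ← hSdef]
  have hqpos : ∀ i, 0 < q i := by
    intro i
    have h1 : 0 < (1-μ) * (Real.exp (z i)/(1+S)) :=
      mul_pos h1μ (div_pos (Real.exp_pos _) hD)
    have h2 : 0 ≤ μ/((K:ℝ)+1) := div_nonneg hμ0 hK.le
    rw [hq]; linarith
  set r : ℝ := (1-μ)/(1+S) + μ/((K:ℝ)+1) with hrdef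
  have hrpos : 0 < r := by
    have h1 : 0 < (1-μ)/(1+S) := div_pos h1μ hD
    have h2 : 0 ≤ μ/((K:ℝ)+1) := div_nonneg hμ0 hK.le
    rw [hrdef]; linarith
  have hsumq : ∑ k, q k = (1-μ) * (S/(1+S)) + (K:ℝ) * (μ/((K:ℝ)+1)) := by
    simp only [hq, Finset.sum_add_distrib, Finset.sum_const, Finset.card_univ,
      Fintype.card_fin, nsmul_eq_mul, ← Finset.mul_sum, ← Finset.sum_div, ← hSdef]
  have hr : 1 - ∑ k, q k = r := by
    rw [hsumq, hrdef]; field_simp; ring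
  have hzμ' : ∀ i, zμ i = Real.log (q i / r) := by
    intro i; rw [hzμ, hσp]
    rw [show (fun i => (1 - μ) * σ z i + μ / ((K:ℕ) + 1:ℝ)) = q from rfl, hr]
  have hexp : ∀ i, Real.exp (zμ i) = q i / r := by
    intro i; rw [hzμ' i, Real.exp_log (div_pos (hqpos i) hrpos)]
  have hsumexp : 1 + ∑ k, Real.exp (zμ k) = 1/r := by
    simp only [hexp, ← Finset.sum_div]
    have h1 : ∑ k, q k = 1 - r := by linarith
    rw [h1]; field_simp; ring
  clear_value S q r
  -- key inequality
  have key : ∀ a b : ℝ, 0 < a → 0 < b → (1-μ)*a ≤ b →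
      Real.log a - Real.log b ≤ 2*μ := by
    intro a b ha hb hab
    rw [← Real.log_div ha.ne' hb.ne']
    have h2 : a / b ≤ 1/(1-μ) := by
      rw [div_le_div_iff₀ hb h1μ]; nlinarith
    have h3 : Real.log (a/b) ≤ Real.log (1/(1-μ)) :=
      Real.log_le_log (by positivity) h2
    have h4 : Real.log (1/(1-μ)) ≤ 1/(1-μ) - 1 :=
      Real.log_le_sub_one_of_pos (by positivity)
    have h5 : 1/(1-μ) - 1 ≤ 2*μ := by
      have : 1/(1-μ) ≤ 1 + 2*μ := by
        rw [div_le_iff₀ h1μ]; nlinarith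
      linarith
    linarith
  constructor
  · intro hμpos i
    have hμK : 0 < μ/((K:ℝ)+1) := div_pos hμpos hK
    have hexpS : Real.exp (z i) ≤ S := by
      rw [hSdef]
      exact Finset.single_le_sum (f := fun k => Real.exp (z k))
        (fun k _ => (Real.exp_pos _).le) (Finset.mem_univ i)
    have hpe : Real.exp (z i) / (1+S) ≤ 1 := by
      rw [div_le_one hD]; linarith
    have hμKμ : μ/((K:ℝ)+1) ≤ μ := by
      rw [div_le_iff₀ hK]; nlinarith
    have hq_ub : q i ≤ 1 := by
      rw [hq]
      have : (1-μ) * (Real.exp (z i)/(1+S)) ≤ (1-μ) * 1 :=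
        mul_le_mul_of_nonneg_left hpe h1μ.le
      linarith
    have hq_lb : μ/((K:ℝ)+1) ≤ q i := by
      rw [hq]
      have : 0 ≤ (1-μ) * (Real.exp (z i)/(1+S)) :=
        mul_nonneg h1μ.le (div_nonneg (Real.exp_pos _).le hD.le)
      linarith
    have hr_ub : r ≤ 1 := by
      rw [hrdef]
      have : (1-μ)/(1+S) ≤ 1-μ := by
        rw [div_le_iff₀ hD]; nlinarith
      linarith
    have hr_lb : μ/((K:ℝ)+1) ≤ r := by
      rw [hrdef]
      have : 0 ≤ (1-μ)/(1+S) := div_nonneg h1μ.le hD.le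
      linarith
    have hKμpos : 0 < ((K:ℝ)+1)/μ := div_pos hK hμpos
    have hμKinv : μ/((K:ℝ)+1) = (((K:ℝ)+1)/μ)⁻¹ := by
      rw [inv_div]
    rw [hzμ' i, abs_le]
    constructor
    · have h1 : μ/((K:ℝ)+1) ≤ q i / r := by
        rw [le_div_iff₀ hrpos]
        have h := mul_le_mul_of_nonneg_left hr_ub hμK.le
        rw [mul_one] at h
        linarith
      have h2 : Real.log (μ/((K:ℝ)+1)) ≤ Real.log (q i / r) :=
        Real.log_le_log hμK h1
      have h3 : Real.log (μ/((K:ℝ)+1)) = -Real.log (((K:ℝ)+1)/μ) := by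
        rw [hμKinv, Real.log_inv]
      have h4 : Real.log (((K:ℝ)+1)/μ) ≤ Real.log (1 + ((K:ℝ)+1)/μ) :=
        Real.log_le_log hKμpos (by linarith)
      push_cast
      linarith
    · have h1 : q i / r ≤ ((K:ℝ)+1)/μ := by
        rw [div_le_div_iff₀ hrpos hμpos]
        have e1 : q i * μ ≤ 1 * μ := mul_le_mul_of_nonneg_right hq_ub hμpos.le
        have e2 : ((K:ℝ)+1)*(μ/((K:ℝ)+1)) = μ := by field_simp
        have e3 : ((K:ℝ)+1)*(μ/((K:ℝ)+1)) ≤ ((K:ℝ)+1)*r :=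
          mul_le_mul_of_nonneg_left hr_lb hK.le
        rw [one_mul] at e1
        linarith
      have h2 : Real.log (q i / r) ≤ Real.log (1 + ((K:ℝ)+1)/μ) :=
        Real.log_le_log (div_pos (hqpos i) hrpos) (by linarith)
      push_cast
      linarith
  · intro c
    rw [hloss, hloss]
    match c with
    | none =>
      simp only [one_div_one_div]
      rw [hsumexp, ← hSdef]
      apply key _ _ (by positivity) hD
      have hrD : r * (1+S) = (1-μ) + μ*(1+S)/((K:ℝ)+1) := by
        rw [hrdef]; field_simp
      have h0 : 0 ≤ μ*(1+S)/((K:ℝ)+1) := by positivity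
      have hrD' : (1+S) * r = (1-μ) + μ*(1+S)/((K:ℝ)+1) := by rw [mul_comm]; exact hrD
      rw [mul_one_div, div_le_iff₀ hrpos]
      linarith
    | some i =>
      have hσzμ : σ zμ i = q i := by
        rw [hσ, hsumexp, hexp]
        field_simp
      have hσz : σ z i = Real.exp (z i) / (1+S) := by rw [hσ, ← hSdef]
      show Real.log (1 / σ zμ i) - Real.log (1 / σ z i) ≤ 2*μ
      rw [hσzμ, hσz]
      have hppos : 0 < Real.exp (z i) / (1+S) := div_pos (Real.exp_pos _) hD
      apply key _ _ (one_div_pos.mpr (hqpos i)) (one_div_pos.mpr hppos)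
      rw [mul_one_div, div_le_div_iff₀ (hqpos i) hppos]
      have hqi := hq i
      have h0 : 0 ≤ μ/((K:ℝ)+1) := div_nonneg hμ0 hK.le
      rw [one_mul]
      linarith
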